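/- Extension degree bound: if C ⊆ F_{q^m}^N is a maximum sum-rank distance code for the sum-rank length partition with all blocks of equal size N/L and d_SR(C) > 1, then m ≥ N/L. -/

import Mathlib

/-- A matrix whose rows vanish outside a finset `T` has rank at most `T.card`. -/
lemma rank_le_card_rows {K : Type*} [Field K] {p q : Type*} [Fintype p] [Fintype q]
    (A : Matrix p q K) (T : Finset p) (h : ∀ i ∉ T, A i = 0) : A.rank ≤ T.card := by
  classical
  rw [Matrix.rank_eq_finrank_span_row]
  have hsub : Set.range A ⊆ insert (0 : q → K) ((T.image (fun i => A i)) : Set _) := by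
    rintro v ⟨i, rfl⟩
    by_cases hi : i ∈ T
    · exact Set.mem_insert_of_mem _ (by simpa using Finset.mem_image_of_mem _ hi)
    · simp [h i hi]
  have h1 : Module.finrank K (Submodule.span K (Set.range A)) ≤
      Module.finrank K (Submodule.span K
        (insert (0 : q → K) ((T.image (fun i => A i)) : Set _))) :=
    Submodule.finrank_mono (Submodule.span_mono hsub)
  rw [Submodule.span_insert_zero] at h1
  exact h1.trans ((finrank_span_finset_le_card _).trans Finset.card_image_le)



/-- The matrix representation map with respect to an ordered basis `B`. -/
noncomputable def matrixRep {Fq Fqm : Type*} [Field Fq] [Field Fqm] [Algebra Fq Fqm]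
    {m : ℕ} (B : Module.Basis (Fin m) Fq Fqm) {s : Type*} (c : s → Fqm) :
    Matrix (Fin m) s Fq :=
  Matrix.of fun i j => B.repr (c j) i

/-- Extension degree bound: if `C ⊆ Fqm^N` (with `N = L * n` and the sum-rank
length partition having all `L` blocks of equal size `n = N / L`) is a
maximum sum-rank distance code with minimum sum-rank distance `d > 1`, then
`m ≥ N / L`. -/
theorem extension_degree_bound {Fq Fqm : Type*} [Field Fq] [Fintype Fq] [Field Fqm]
    [Algebra Fq Fqm] {m L n : ℕ} (B : Module.Basis (Fin m) Fq Fqm)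
    (C : Finset (Fin L → Fin n → Fqm)) (hC : 2 ≤ C.card) (d : ℕ)
    (hd : IsLeast {k | ∃ c ∈ C, ∃ c' ∈ C, c ≠ c' ∧
        (∑ ℓ, (matrixRep B (c ℓ) - matrixRep B (c' ℓ)).rank) = k} d)
    (hMSRD : C.card = (Fintype.card Fq) ^ (m * (L * n - d + 1)))
    (hd1 : 1 < d) :
    n ≤ m := by
  classical
  by_contra hmn
  push_neg at hmn  -- hmn : m < n
  -- d ≤ L * m, from the witness pair achieving the minimum
  obtain ⟨⟨c0, hc0, c0', hc0', hne0, hsum0⟩, hlb⟩ := hd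
  have hdLm : d ≤ L * m := by
    rw [← hsum0]
    calc ∑ ℓ, (matrixRep B (c0 ℓ) - matrixRep B (c0' ℓ)).rank
        ≤ ∑ _ℓ : Fin L, m := by
          refine Finset.sum_le_sum fun ℓ _ => ?_
          simpa using Matrix.rank_le_card_height (matrixRep B (c0 ℓ) - matrixRep B (c0' ℓ))
      _ = L * m := by simp [Finset.sum_const, Nat.smul_one_eq_cast, mul_comm]
  -- the row-deletion (puncturing) map
  set e : Fin L × Fin m ≃ Fin (L * m) := finProdFinEquiv with he
  set a := d - 1 with ha
  have ha1 : 1 ≤ a := by omega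
  have haLm : a ≤ L * m := by omega
  set F : (Fin L → Fin n → Fqm) → (Fin (L * m - a) → Fin n → Fq) :=
    fun c k j =>
      let p := e.symm ⟨a + k.val, by omega⟩
      matrixRep B (c p.1) p.2 j with hF
  -- F is injective on C
  have hinj : Set.InjOn F (C : Set _) := by
    intro c hc c' hc' hFeq
    by_contra hne
    have hdle : d ≤ ∑ ℓ, (matrixRep B (c ℓ) - matrixRep B (c' ℓ)).rank :=
      hlb ⟨c, hc, c', hc', hne, rfl⟩
    -- each block's difference has nonzero rows only where e ⟨ℓ, i⟩ < a
    have hrank : ∀ ℓ, (matrixRep B (c ℓ) - matrixRep B (c' ℓ)).rank ≤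
        (Finset.univ.filter (fun i : Fin m => (e (ℓ, i)).val < a)).card := by
      intro ℓ
      refine rank_le_card_rows _ _ fun i hi => ?_
      simp only [Finset.mem_filter, Finset.mem_univ, true_and, not_lt] at hi
      funext j
      have hlt : (e (ℓ, i)).val - a < L * m - a := by
        have := (e (ℓ, i)).isLt
        omega
      have := congrFun (congrFun hFeq ⟨(e (ℓ, i)).val - a, hlt⟩) j
      simp only [hF] at this
      have hval : (⟨a + ((e (ℓ, i)).val - a), by omega⟩ : Fin (L * m)) = e (ℓ, i) := by
        ext; simp; omega
      rw [hval, Equiv.symm_apply_apply] at this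
      simp [Matrix.sub_apply, this]
    -- total count of "deleted" rows is a = d - 1
    have hcount : ∑ ℓ : Fin L,
        (Finset.univ.filter (fun i : Fin m => (e (ℓ, i)).val < a)).card = a := by
      have h1 : ∑ ℓ : Fin L,
          (Finset.univ.filter (fun i : Fin m => (e (ℓ, i)).val < a)).card
          = (Finset.univ.filter (fun p : Fin L × Fin m => (e p).val < a)).card := by
        simp only [Finset.card_filter, Fintype.sum_prod_type]
      rw [h1]
      have h2 : (Finset.univ.filter (fun p : Fin L × Fin m => (e p).val < a)).card
          = (Finset.univ.filter (fun v : Fin (L * m) => v.val < a)).card := by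
        apply Finset.card_bij (fun p _ => e p)
        · intro p hp; simpa using (by simpa using hp)
        · intro p _ p' _ hpp; exact e.injective hpp
        · intro v hv; exact ⟨e.symm v, by simpa using (by simpa using hv), by simp⟩
      rw [h2]
      have h3 : (Finset.univ.filter (fun v : Fin (L * m) => v.val < a))
          = Finset.map (Fin.castLEEmb haLm) Finset.univ := by
        ext v
        simp only [Finset.mem_filter, Finset.mem_univ, true_and, Finset.mem_map]
        constructor
        · intro hv; exact ⟨⟨v.val, hv⟩, by ext; simp⟩
        · rintro ⟨w, rfl⟩; simpa using w.isLt
      rw [h3]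
      simp
    have : d ≤ a := hdle.trans (le_of_le_of_eq (Finset.sum_le_sum fun ℓ _ => hrank ℓ) hcount)
    omega
  -- cardinality bound
  have hcard : C.card ≤ (Fintype.card Fq) ^ (n * (L * m - a)) := by
    have := Finset.card_le_card_of_injOn F (fun _ _ => Finset.mem_univ _) hinj
    calc C.card ≤ (Finset.univ : Finset (Fin (L * m - a) → Fin n → Fq)).card := this
      _ = (Fintype.card Fq) ^ (n * (L * m - a)) := by
          simp [Finset.card_univ, Fintype.card_fun, ← pow_mul, mul_comm]
  -- compare exponents
  have hq : 1 < Fintype.card Fq := Fintype.one_lt_card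
  rw [hMSRD] at hcard
  have hexp : m * (L * n - d + 1) ≤ n * (L * m - a) :=
    (pow_le_pow_iff_right₀ hq).mp hcard
  have hLn : L * m ≤ L * n := Nat.mul_le_mul_left _ hmn.le
  have hrw : L * n - d + 1 = L * n - a := by omega
  rw [hrw] at hexp
  zify [haLm, haLm.trans hLn] at hexp
  have hna : (n : ℤ) * a ≤ m * a := by nlinarith
  have : (n : ℤ) ≤ m := le_of_mul_le_mul_right hna (by exact_mod_cast ha1)
  omega
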